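/- Let Ĝ and G be finite groups and π : Ĝ → G a surjective homomorphism whose kernel is a characteristic subgroup of Ĝ; let ζ : MulAut Ĝ → MulAut G be the unique homomorphism with ζ(ψ) ∘ π = π ∘ ψ for all ψ. Let r̂ : Fin m̂ → FreeGroup (Fin n) be a presentation P̂ of Ĝ having some presentation n-tuple â, and r : Fin m → FreeGroup (Fin n) a presentation P of G such that π ∘ â is a presentation n-tuple of P. Then ζ is surjective if and only if for every presentation n-tuple b of P there exists a presentation n-tuple b̂ of P̂ with π ∘ b̂ = b. -/
import Mathlib

private lemma factor_lemma {F G H : Type*} [Group F] [Group G] [Group H]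
    (f : F →* G) (hf : Function.Surjective f) (g : F →* H) (h : f.ker ≤ g.ker) :
    ∃ φ : G →* H, ∀ x, φ (f x) = g x := by
  refine ⟨(QuotientGroup.lift f.ker g h).comp
    (QuotientGroup.quotientKerEquivOfSurjective f hf).symm.toMonoidHom, fun x => ?_⟩
  have : (QuotientGroup.quotientKerEquivOfSurjective f hf).symm (f x)
      = QuotientGroup.mk x := by
    rw [MulEquiv.symm_apply_eq]
    rfl
  simp [this]

/-- Kernel of a surjective hom into a finite group is determined. -/
private lemma ker_eq_lemma {F G : Type*} [Group F] [Group G] [Finite G]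
    (f g : F →* G) (hf : Function.Surjective f) (hg : Function.Surjective g)
    (h : f.ker ≤ g.ker) : g.ker = f.ker := by
  obtain ⟨φ, hφ⟩ := factor_lemma f hf g h
  have hφsurj : Function.Surjective φ := by
    intro y
    obtain ⟨x, hx⟩ := hg y
    exact ⟨f x, by rw [hφ, hx]⟩
  have hφinj : Function.Injective φ :=
    (Finite.injective_iff_surjective.mpr hφsurj)
  ext x
  constructor
  · intro hx
    have : φ (f x) = φ 1 := by
      rw [hφ, map_one]
      exact hx
    simpa [MonoidHom.mem_ker] using hφinj this
  · exact fun hx => h hx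

private lemma equiv_lemma {F G : Type*} [Group F] [Group G] [Finite G]
    (f g : F →* G) (hf : Function.Surjective f) (hg : Function.Surjective g)
    (h : f.ker = g.ker) : ∃ e : G ≃* G, ∀ x, e (f x) = g x := by
  obtain ⟨φ, hφ⟩ := factor_lemma f hf g h.le
  have hφsurj : Function.Surjective φ := fun y => by
    obtain ⟨x, hx⟩ := hg y
    exact ⟨f x, by rw [hφ, hx]⟩
  exact ⟨MulEquiv.ofBijective φ ⟨Finite.injective_iff_surjective.mpr hφsurj, hφsurj⟩, hφ⟩

private lemma lift_comp_lemma {n : ℕ} {G H : Type*} [Group G] [Group H]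
    (φ : G →* H) (a : Fin n → G) :
    FreeGroup.lift (φ ∘ a) = φ.comp (FreeGroup.lift a) := by
  refine (FreeGroup.ext_hom _ _ fun j => ?_).symm
  simp

/-- Theorem `sizeker` (c): `ζ` is surjective iff every presentation tuple of
`P` lifts via `π` to a presentation tuple of `P̂`. -/
theorem stmt_4 {Ghat G : Type*} [Group Ghat] [Group G] [Finite Ghat] [Finite G]
    (π : Ghat →* G) (hπ : Function.Surjective π) (hchar : π.ker.Characteristic)
    (ζ : MulAut Ghat →* MulAut G)
    (hζ : ∀ (ψ : MulAut Ghat) (g : Ghat), ζ ψ (π g) = π (ψ g))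
    {n mhat m : ℕ} (rhat : Fin mhat → FreeGroup (Fin n)) (r : Fin m → FreeGroup (Fin n))
    (hPhat : ∃ f : FreeGroup (Fin n) →* Ghat, Function.Surjective f ∧
      f.ker = Subgroup.normalClosure (Set.range rhat))
    (hP : ∃ f : FreeGroup (Fin n) →* G, Function.Surjective f ∧
      f.ker = Subgroup.normalClosure (Set.range r))
    (ahat : Fin n → Ghat)
    (hahat : Function.Surjective (FreeGroup.lift ahat) ∧
      ∀ k, FreeGroup.lift ahat (rhat k) = 1)
    (hπahat : Function.Surjective (FreeGroup.lift (π ∘ ahat)) ∧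
      ∀ k, FreeGroup.lift (π ∘ ahat) (r k) = 1) :
    Function.Surjective ζ ↔
      ∀ b : Fin n → G,
        (Function.Surjective (FreeGroup.lift b) ∧ ∀ k, FreeGroup.lift b (r k) = 1) →
        ∃ bhat : Fin n → Ghat,
          (Function.Surjective (FreeGroup.lift bhat) ∧
            ∀ k, FreeGroup.lift bhat (rhat k) = 1) ∧ π ∘ bhat = b := by
  obtain ⟨fhat, hfhatsurj, hfhatker⟩ := hPhat
  obtain ⟨f, hfsurj, hfker⟩ := hP
  -- kernel of lift of any presentation tuple of P equals ker f
  have kerP : ∀ b : Fin n → G, Function.Surjective (FreeGroup.lift b) →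
      (∀ k, FreeGroup.lift b (r k) = 1) → (FreeGroup.lift b).ker = f.ker := by
    intro b hbs hbr
    refine ker_eq_lemma f (FreeGroup.lift b) hfsurj hbs ?_
    rw [hfker]
    refine Subgroup.normalClosure_le_normal ?_
    rintro x ⟨k, rfl⟩
    exact hbr k
  have kerPhat : ∀ b : Fin n → Ghat, Function.Surjective (FreeGroup.lift b) →
      (∀ k, FreeGroup.lift b (rhat k) = 1) → (FreeGroup.lift b).ker = fhat.ker := by
    intro b hbs hbr
    refine ker_eq_lemma fhat (FreeGroup.lift b) hfhatsurj hbs ?_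
    rw [hfhatker]
    refine Subgroup.normalClosure_le_normal ?_
    rintro x ⟨k, rfl⟩
    exact hbr k
  constructor
  · intro hsurj b ⟨hbs, hbr⟩
    -- both π∘ahat and b are presentation tuples of P, get automorphism α
    obtain ⟨α, hα⟩ := equiv_lemma (FreeGroup.lift (π ∘ ahat)) (FreeGroup.lift b)
      hπahat.1 hbs (by rw [kerP _ hπahat.1 hπahat.2, kerP b hbs hbr])
    obtain ⟨ψ, hψ⟩ := hsurj α
    refine ⟨fun j => ψ (ahat j), ⟨?_, ?_⟩, ?_⟩
    · rw [show (fun j => ψ (ahat j)) = (ψ : Ghat →* Ghat) ∘ ahat from rfl,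
        lift_comp_lemma]
      exact ψ.surjective.comp hahat.1
    · intro k
      rw [show (fun j => ψ (ahat j)) = (ψ : Ghat →* Ghat) ∘ ahat from rfl,
        lift_comp_lemma]
      simp [hahat.2 k]
    · funext j
      have h1 : π (ψ (ahat j)) = ζ ψ (π (ahat j)) := (hζ ψ (ahat j)).symm
      have h2 : α (FreeGroup.lift (π ∘ ahat) (FreeGroup.of j)) = FreeGroup.lift b (FreeGroup.of j) := hα _
      simp only [FreeGroup.lift_apply_of, Function.comp_apply] at h2
      simp [h1, hψ, h2]
  · intro hlift α
    -- b := α ∘ π ∘ ahat is a presentation tuple of P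
    set b : Fin n → G := fun j => α (π (ahat j)) with hb
    have hbeq : FreeGroup.lift b = (α : G →* G).comp (FreeGroup.lift (π ∘ ahat)) := by
      rw [show b = (α : G →* G) ∘ (π ∘ ahat) from rfl, lift_comp_lemma]
    have hbs : Function.Surjective (FreeGroup.lift b) := by
      rw [hbeq]; exact α.surjective.comp hπahat.1
    have hbr : ∀ k, FreeGroup.lift b (r k) = 1 := by
      intro k; rw [hbeq]; simp [hπahat.2 k]
    obtain ⟨bhat, ⟨hbhats, hbhatr⟩, hbhatb⟩ := hlift b ⟨hbs, hbr⟩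
    obtain ⟨ψ, hψ⟩ := equiv_lemma (FreeGroup.lift ahat) (FreeGroup.lift bhat)
      hahat.1 hbhats (by rw [kerPhat _ hahat.1 hahat.2, kerPhat _ hbhats hbhatr])
    refine ⟨ψ, ?_⟩
    have key : ∀ g : G, ζ ψ g = α g := by
      intro g
      -- π ∘ lift ahat = lift (π ∘ ahat) is surjective
      have hcomp : FreeGroup.lift (π ∘ ahat) = π.comp (FreeGroup.lift ahat) :=
        lift_comp_lemma π ahat
      obtain ⟨x, hx⟩ := hπahat.1 g
      rw [hcomp] at hx
      simp only [MonoidHom.comp_apply] at hx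
      rw [← hx, hζ ψ, hψ x]
      have hπb : π (FreeGroup.lift bhat x) = FreeGroup.lift b x := by
        have := lift_comp_lemma π bhat
        rw [hbhatb] at this
        rw [this]; rfl
      rw [hπb, hbeq]
      simp [hcomp]
    exact MulEquiv.ext key
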